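/- In any symmetric 2×2 game, imitation is essentially unbeatable: against an imitator who copies the opponent's previous action exactly when the opponent's previous-period relative payoff Δ(x_{t},y_{t}) > 0, no sequence of opponent actions achieves cumulative relative payoff exceeding max_{x,y} Δ(x,y). -/

import Mathlib

/-- In any symmetric 2×2 game, imitate-if-better is essentially unbeatable: the
cumulative relative payoff of the opponent never exceeds the maximal one-period
payoff differential. -/
theorem two_by_two_imitation_unbeatable {X : Type*} [Fintype X]
    (hcard : Fintype.card X = 2)
    (π : X → X → ℝ) (Δ : X → X → ℝ) (hΔ : ∀ x y, Δ x y = π x y - π y x)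
    (x y : ℕ → X)
    (hrule : ∀ t, y (t + 1) = if 0 < Δ (x t) (y t) then x t else y t) :
    ∀ T, ∑ t ∈ Finset.range (T + 1), Δ (x t) (y t) ≤
      sSup (Set.range fun p : X × X => Δ p.1 p.2) := by
  have hΔanti : ∀ u v, Δ u v = -Δ v u := by intro u v; rw [hΔ, hΔ]; ring
  have hΔself : ∀ u, Δ u u = 0 := by intro u; rw [hΔ]; ring
  have hcard' : Nat.card X = 2 := by rw [Nat.card_eq_fintype_card, hcard]
  obtain ⟨a, b, hab, huniv⟩ := Nat.card_eq_two_iff.mp hcard'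
  have hmem : ∀ c : X, c = a ∨ c = b := by
    intro c
    have hc : c ∈ ({a, b} : Set X) := by rw [huniv]; trivial
    simpa using hc
  have pair : ∀ u v w : X, u ≠ w → v ≠ w → u = v := by
    intro u v w h1 h2
    rcases hmem u with hu | hu <;> rcases hmem v with hv | hv <;>
      rcases hmem w with hw | hw <;> subst hu <;> subst hv <;> subst hw <;>
        first | rfl | exact absurd rfl h1 | exact absurd rfl h2
  have hbdd : BddAbove (Set.range fun p : X × X => Δ p.1 p.2) :=
    (Set.finite_range _).bddAbove
  have hle : ∀ u v, Δ u v ≤ sSup (Set.range fun p : X × X => Δ p.1 p.2) :=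
    fun u v => le_csSup hbdd ⟨(u, v), rfl⟩
  have h0M : (0 : ℝ) ≤ sSup (Set.range fun p : X × X => Δ p.1 p.2) := by
    simpa [hΔself a] using hle a a
  have key : ∀ T, ∀ z, z ≠ y (T + 1) →
      ∑ t ∈ Finset.range (T + 1), Δ (x t) (y t) ≤ max 0 (Δ (y (T + 1)) z) := by
    intro T
    induction T with
    | zero =>
      intro z hz
      simp only [zero_add, Finset.sum_range_one]
      by_cases h : 0 < Δ (x 0) (y 0)
      · have hy1 : y 1 = x 0 := by rw [hrule 0]; simp [h]
        have hxy : x 0 ≠ y 0 := by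
          intro he; rw [he, hΔself] at h; exact lt_irrefl _ h
        have hz' : z = y 0 := pair z (y 0) (x 0) (hy1 ▸ hz) (fun he => hxy he.symm)
        rw [hy1, hz']
        exact le_max_right _ _
      · push_neg at h
        exact h.trans (le_max_left _ _)
    | succ T ih =>
      intro z hz
      rw [Finset.sum_range_succ]
      by_cases h : 0 < Δ (x (T + 1)) (y (T + 1))
      · have hy2 : y (T + 2) = x (T + 1) := by rw [hrule (T + 1)]; simp [h]
        have hxy : x (T + 1) ≠ y (T + 1) := by
          intro he; rw [he, hΔself] at h; exact lt_irrefl _ h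
        have hz' : z = y (T + 1) := pair z (y (T + 1)) (x (T + 1)) (hy2 ▸ hz) (fun he => hxy he.symm)
        have hS := ih (x (T + 1)) hxy
        have hmax0 : max 0 (Δ (y (T + 1)) (x (T + 1))) = 0 := by
          apply max_eq_left
          rw [hΔanti]; linarith
        rw [hmax0] at hS
        rw [hy2, hz']
        have := le_max_right (0 : ℝ) (Δ (x (T + 1)) (y (T + 1)))
        linarith
      · push_neg at h
        have hy2 : y (T + 2) = y (T + 1) := by rw [hrule (T + 1)]; simp [not_lt.mpr h]
        have hS := ih z (hy2 ▸ hz)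
        rw [hy2]
        linarith
  intro T
  have hz : ∃ z : X, z ≠ y (T + 1) := by
    rcases hmem (y (T + 1)) with h1 | h1
    · exact ⟨b, by rw [h1]; exact fun he => hab he.symm⟩
    · exact ⟨a, by rw [h1]; exact hab⟩
  obtain ⟨z, hz⟩ := hz
  exact (key T z hz).trans (max_le h0M (hle _ _))
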